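/- Let G and H be graphs each with at least two vertices, with G connected. If γ(H) ≥ 3, then the lexicographic product G[H] is not well-dominated. -/

import Mathlib

open SimpleGraph Finset

/-- Open neighborhood of a set: vertices having a neighbor in `S`. -/
def nbhd {V : Type*} (G : SimpleGraph V) (S : Set V) : Set V := {v | ∃ u ∈ S, G.Adj u v}

/-- Closed neighborhood of a vertex. -/
def closedNbhd {V : Type*} (G : SimpleGraph V) (v : V) : Set V := insert v (G.neighborSet v)

/-- `S` dominates vertex `v`. -/
def Dominates {V : Type*} (G : SimpleGraph V) (S : Set V) (v : V) : Prop :=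
  v ∈ S ∨ ∃ u ∈ S, G.Adj u v

/-- `D` is a dominating set of `G`. -/
def IsDomSet {V : Type*} (G : SimpleGraph V) (D : Set V) : Prop := ∀ v, Dominates G D v

/-- `D` is a minimal dominating set of `G`. -/
def IsMinDomSet {V : Type*} (G : SimpleGraph V) (D : Set V) : Prop :=
  IsDomSet G D ∧ ∀ D' ⊂ D, ¬ IsDomSet G D'

/-- `D` is an irreducible dominating set of `G`. -/
def IsIrredDomSet {V : Type*} (G : SimpleGraph V) (D : Set V) : Prop :=
  IsDomSet G D ∧ ¬ ∃ u ∈ D, IsDomSet G (D \ {u}) ∧ nbhd G D = nbhd G (D \ {u})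

/-- Lexicographic product of two simple graphs. -/
def lexProd {V W : Type*} (G : SimpleGraph V) (H : SimpleGraph W) : SimpleGraph (V × W) where
  Adj p q := G.Adj p.1 q.1 ∨ (p.1 = q.1 ∧ H.Adj p.2 q.2)
  symm := by
    constructor
    rintro p q (h | ⟨e, h⟩)
    · exact Or.inl h.symm
    · exact Or.inr ⟨e.symm, h.symm⟩
  loopless := by
    constructor
    rintro p (h | ⟨_, h⟩)
    · exact G.loopless.irrefl _ h
    · exact H.loopless.irrefl _ h

/-- Projection of `D ⊆ V(G) × V(H)` to `G`. -/
def projG {V W : Type*} (D : Set (V × W)) : Set V := {x | ∃ y, (x, y) ∈ D}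

/-- Fiber of `D ⊆ V(G) × V(H)` over `x ∈ V(G)`. -/
def projH {V W : Type*} (D : Set (V × W)) (x : V) : Set W := {y | (x, y) ∈ D}

/-- The domination number. -/
noncomputable def domNum {V : Type*} [Fintype V] (G : SimpleGraph V) : ℕ :=
  sInf {n | ∃ D : Finset V, IsDomSet G ↑D ∧ D.card = n}

/-- A graph is well-dominated if all its minimal dominating sets have the same size. -/
def WellDominated (V : Type*) [Fintype V] (G : SimpleGraph V) : Prop :=
  ∀ D₁ D₂ : Finset V, IsMinDomSet G ↑D₁ → IsMinDomSet G ↑D₂ → D₁.card = D₂.card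

section Aux
set_option linter.unusedSectionVars false

variable {V : Type*} [Fintype V] {G : SimpleGraph V}

omit [Fintype V] in
lemma isDomSet_mono {D D' : Set V} (h : D ⊆ D') (hD : IsDomSet G D) : IsDomSet G D' := by
  intro v
  rcases hD v with hv | ⟨u, hu, ha⟩
  · exact Or.inl (h hv)
  · exact Or.inr ⟨u, h hu, ha⟩

lemma isMinDomSet_of_erase [DecidableEq V] {D : Finset V} (hdom : IsDomSet G ↑D)
    (h : ∀ p ∈ D, ¬ IsDomSet G ↑(D.erase p)) : IsMinDomSet G ↑D := by
  refine ⟨hdom, fun D' hsub hdom' => ?_⟩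
  obtain ⟨p, hpD, hpD'⟩ := Set.exists_of_ssubset hsub
  refine h p hpD ?_
  refine isDomSet_mono ?_ hdom'
  rw [Finset.coe_erase]
  intro x hx
  exact ⟨hsub.1 hx, by rintro rfl; exact hpD' hx⟩

lemma exists_min_subset {α : Type*} [DecidableEq α] (P : Finset α → Prop) :
    ∀ s : Finset α, P s → ∃ t, t ⊆ s ∧ P t ∧ ∀ u ∈ t, ¬ P (t.erase u) := by
  intro s
  induction s using Finset.strongInduction with
  | _ s ih =>
    intro hs
    by_cases h : ∀ u ∈ s, ¬ P (s.erase u)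
    · exact ⟨s, Finset.Subset.refl s, hs, h⟩
    · push_neg at h
      obtain ⟨u, hu, hPu⟩ := h
      obtain ⟨t, hts, ht⟩ := ih (s.erase u) (Finset.erase_ssubset hu) hPu
      exact ⟨t, hts.trans (Finset.erase_subset _ _), ht⟩

lemma exists_adj_of_conn (hc : G.Connected) (h2 : 2 ≤ Fintype.card V) (v : V) :
    ∃ u, G.Adj u v := by
  obtain ⟨w, hw⟩ := Fintype.exists_ne_of_one_lt_card (by omega) v
  obtain ⟨p⟩ := hc v w
  cases p with
  | nil => exact absurd rfl hw.symm
  | cons h q => exact ⟨_, h.symm⟩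

lemma univ_isDomSet (G : SimpleGraph V) : IsDomSet G ↑(Finset.univ : Finset V) := by
  intro v; exact Or.inl (by simp)

lemma domNum_le_card {D : Finset V} (hD : IsDomSet G ↑D) : domNum G ≤ D.card :=
  Nat.sInf_le ⟨D, hD, rfl⟩

lemma exists_min_card_domset (G : SimpleGraph V) :
    ∃ D : Finset V, IsDomSet G ↑D ∧ D.card = domNum G := by
  have hne : {n | ∃ D : Finset V, IsDomSet G ↑D ∧ D.card = n}.Nonempty :=
    ⟨_, Finset.univ, univ_isDomSet G, rfl⟩
  exact Nat.sInf_mem hne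

lemma exists_indep_domset (G : SimpleGraph V) [Nonempty V] :
    ∃ I : Finset V, IsDomSet G ↑I ∧ ∀ u ∈ I, ∀ v ∈ I, ¬ G.Adj u v := by
  classical
  let s : Finset (Finset V) :=
    Finset.univ.powerset.filter (fun t => ∀ u ∈ t, ∀ v ∈ t, ¬ G.Adj u v)
  have hne : s.Nonempty := ⟨∅, by simp [s]⟩
  obtain ⟨I, hIs, hmax⟩ := Finset.exists_max_image s Finset.card hne
  have hind : ∀ u ∈ I, ∀ v ∈ I, ¬ G.Adj u v := (Finset.mem_filter.mp hIs).2
  refine ⟨I, ?_, hind⟩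
  intro x
  by_contra hx
  rw [Dominates] at hx
  push_neg at hx
  obtain ⟨hx1, hx2⟩ := hx
  have hxI : x ∉ I := fun h => hx1 (Finset.mem_coe.mpr h)
  have hins : insert x I ∈ s := by
    refine Finset.mem_filter.mpr ⟨by simp, ?_⟩
    intro u hu v hv hadjuv
    rcases Finset.mem_insert.mp hu with hu1 | hu2
    · rcases Finset.mem_insert.mp hv with hv1 | hv2
      · rw [hu1, hv1] at hadjuv; exact G.loopless.irrefl _ hadjuv
      · rw [hu1] at hadjuv
        exact hx2 v (Finset.mem_coe.mpr hv2) hadjuv.symm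
    · rcases Finset.mem_insert.mp hv with hv1 | hv2
      · rw [hv1] at hadjuv
        exact hx2 u (Finset.mem_coe.mpr hu2) hadjuv
      · exact hind u hu2 v hv2 hadjuv
  have := hmax _ hins
  rw [Finset.card_insert_of_notMem hxI] at this
  omega

end Aux

theorem stmt18 {V W : Type*} [Fintype V] [Fintype W]
    (G : SimpleGraph V) (H : SimpleGraph W)
    (hVcard : 2 ≤ Fintype.card V) (hWcard : 2 ≤ Fintype.card W)
    (hGconn : G.Connected)
    (hHγ : 3 ≤ domNum H) :
    ¬ WellDominated (V × W) (lexProd G H) := by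
  classical
  have hVne : Nonempty V := Fintype.card_pos_iff.mp (by omega)
  have hWne : Nonempty W := Fintype.card_pos_iff.mp (by omega)
  obtain ⟨y0⟩ := hWne
  -- y1 : a vertex of H not dominated by {y0}
  have hy0nd : ¬ IsDomSet H ↑({y0} : Finset W) := by
    intro h
    have := domNum_le_card h
    simp at this
    omega
  rw [IsDomSet] at hy0nd
  push_neg at hy0nd
  obtain ⟨y1, hy1⟩ := hy0nd
  rw [Dominates] at hy1
  push_neg at hy1
  obtain ⟨hy1a, hy1b⟩ := hy1
  have hy1ne : y1 ≠ y0 := by simpa using hy1a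
  have hy1nadj : ¬ H.Adj y0 y1 := by
    intro h; exact hy1b y0 (by simp) h
  -- B : minimal dominating set of H
  obtain ⟨B, -, hBdom, hBmin⟩ :=
    exists_min_subset (fun s : Finset W => IsDomSet H ↑s) Finset.univ (univ_isDomSet H)
  have hB3 : 3 ≤ B.card := le_trans hHγ (domNum_le_card hBdom)
  have hBne : B.Nonempty := Finset.card_pos.mp (by omega)
  obtain ⟨b0, hb0⟩ := hBne
  -- I : maximal independent (dominating) set of G
  obtain ⟨I, hIdom, hIind⟩ := exists_indep_domset G
  have hIne : I.Nonempty := by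
    obtain ⟨v0⟩ := hVne
    rcases hIdom v0 with hv | ⟨u, hu, -⟩
    · exact ⟨v0, hv⟩
    · exact ⟨u, hu⟩
  have hI1 : 1 ≤ I.card := Finset.card_pos.mpr hIne
  have hγI : domNum G ≤ I.card := domNum_le_card hIdom
  -- T : small minimal total dominating set of G
  obtain ⟨DG, hDGdom, hDGcard⟩ := exists_min_card_domset G
  have hadj : ∀ v : V, ∃ u, G.Adj u v := exists_adj_of_conn hGconn hVcard
  choose f hf using hadj
  set T0 : Finset V := DG ∪ DG.image f with hT0
  have hT0td : ∀ v : V, ∃ u ∈ T0, G.Adj u v := by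
    intro v
    rcases hDGdom v with hv | ⟨u, hu, hadjuv⟩
    · exact ⟨f v, Finset.mem_union_right _ (Finset.mem_image_of_mem f hv), hf v⟩
    · exact ⟨u, Finset.mem_union_left _ hu, hadjuv⟩
  have hT0card : T0.card ≤ 2 * domNum G := by
    calc T0.card ≤ DG.card + (DG.image f).card := Finset.card_union_le _ _
    _ ≤ DG.card + DG.card := by have := Finset.card_image_le (s := DG) (f := f); omega
    _ = 2 * domNum G := by omega
  obtain ⟨T, hTsub, hTtd, hTmin⟩ :=
    exists_min_subset (fun s : Finset V => ∀ v : V, ∃ u ∈ s, G.Adj u v) T0 hT0td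
  have hTcard : T.card ≤ 2 * I.card := by
    have := Finset.card_le_card hTsub; omega
  -- the two minimal dominating sets of the lexicographic product
  set D1 : Finset (V × W) := T ×ˢ ({y0} : Finset W) with hD1
  set D2 : Finset (V × W) := I ×ˢ B with hD2
  have hD1min : IsMinDomSet (lexProd G H) ↑D1 := by
    refine isMinDomSet_of_erase ?_ ?_
    · rintro ⟨x, y⟩
      obtain ⟨u, huT, hux⟩ := hTtd x
      exact Or.inr ⟨(u, y0), by simp [hD1, huT], Or.inl hux⟩
    · rintro ⟨u, y⟩ hmem hdom
      have huT : u ∈ T := (Finset.mem_product.mp hmem).1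
      have hyy0 : y = y0 := by simpa using (Finset.mem_product.mp hmem).2
      subst hyy0
      have hnt := hTmin u huT
      push_neg at hnt
      obtain ⟨w, hw⟩ := hnt
      rcases hdom (w, y1) with hmem' | ⟨⟨v, c⟩, hvc, hadjvc⟩
      · have : (w, y1) ∈ D1 := Finset.mem_of_mem_erase (Finset.mem_coe.mp hmem')
        have := (Finset.mem_product.mp this).2
        simp at this
        exact hy1ne this
      · have hvc' : (v, c) ∈ D1.erase (u, y) := Finset.mem_coe.mp hvc
        have hprod := Finset.mem_of_mem_erase hvc'
        have hvT : v ∈ T := (Finset.mem_product.mp hprod).1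
        have hcy0 : c = y := by simpa using (Finset.mem_product.mp hprod).2
        subst hcy0
        have hvne : v ≠ u := by
          intro h; subst h
          exact (Finset.notMem_erase _ _) hvc'
        rcases hadjvc with h | ⟨h1, h2⟩
        · exact hw v (Finset.mem_erase.mpr ⟨hvne, hvT⟩) h
        · exact hy1nadj h2
  have hD2min : IsMinDomSet (lexProd G H) ↑D2 := by
    refine isMinDomSet_of_erase ?_ ?_
    · rintro ⟨x, y⟩
      by_cases hx : x ∈ I
      · rcases hBdom y with hy | ⟨b, hb, hby⟩
        · refine Or.inl ?_
          simp only [hD2, Finset.coe_product, Set.mem_prod]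
          exact ⟨Finset.mem_coe.mpr hx, hy⟩
        · exact Or.inr ⟨(x, b), by simp [hD2, hx, Finset.mem_coe.mp hb], Or.inr ⟨rfl, hby⟩⟩
      · rcases hIdom x with hx' | ⟨u, hu, hux⟩
        · exact absurd (Finset.mem_coe.mp hx') hx
        · exact Or.inr ⟨(u, b0), by simp [hD2, Finset.mem_coe.mp hu, hb0], Or.inl hux⟩
    · rintro ⟨u, b⟩ hmem hdom
      have huI : u ∈ I := (Finset.mem_product.mp hmem).1
      have hbB : b ∈ B := (Finset.mem_product.mp hmem).2
      have hnd := hBmin b hbB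
      rw [IsDomSet] at hnd
      push_neg at hnd
      obtain ⟨w, hw⟩ := hnd
      rw [Dominates] at hw
      push_neg at hw
      obtain ⟨hw1, hw2⟩ := hw
      rcases hdom (u, w) with hmem' | ⟨⟨v, c⟩, hvc, hadjvc⟩
      · have hmem'' : (u, w) ∈ D2.erase (u, b) := Finset.mem_coe.mp hmem'
        have hwB : w ∈ B := (Finset.mem_product.mp (Finset.mem_of_mem_erase hmem'')).2
        have hwb : w ≠ b := by
          intro h; subst h
          exact (Finset.notMem_erase _ _) hmem''
        exact hw1 (by simp [hwb, hwB])
      · have hvc' : (v, c) ∈ D2.erase (u, b) := Finset.mem_coe.mp hvc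
        have hprod := Finset.mem_of_mem_erase hvc'
        have hvI : v ∈ I := (Finset.mem_product.mp hprod).1
        have hcB : c ∈ B := (Finset.mem_product.mp hprod).2
        rcases hadjvc with h | ⟨h1, h2⟩
        · exact hIind v hvI u huI h
        · have hcb : c ≠ b := by
            intro h; subst h; subst h1
            exact (Finset.notMem_erase _ _) hvc'
          exact hw2 c (by simp [hcb, hcB]) h2
  intro hWD
  have heq := hWD D1 D2 hD1min hD2min
  have hc1 : D1.card = T.card := by simp [hD1]
  have hc2 : D2.card = I.card * B.card := by simp [hD2, Finset.card_product]
  have h3 : I.card * 3 ≤ I.card * B.card := Nat.mul_le_mul_left _ hB3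
  rw [hc1, hc2] at heq
  rw [← heq] at h3
  omega
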